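/- Splitting a perfect tree by a dense open set: let T ⊆ 2^{<ℕ} be a perfect tree (T is nonempty, closed under initial segments, and every node of T has two incomparable extensions in T). Then there exists a set D ⊆ T which is upward closed in T (if σ ∈ D, σ ⪯ τ, and τ ∈ T then τ ∈ D) and dense in T (every node of T has an extension in D), such that T ∖ D is again a perfect tree. -/
import Mathlib


/-- A tree of finite binary strings is perfect if it is nonempty, downward closed
under the prefix order, and every node has two incomparable extensions in the tree. -/
def IsPerfectTree (T : Set (List Bool)) : Prop :=
  T.Nonempty ∧ (∀ σ τ : List Bool, σ <+: τ → τ ∈ T → σ ∈ T) ∧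
    ∀ σ ∈ T, ∃ τ₁ ∈ T, ∃ τ₂ ∈ T, σ <+: τ₁ ∧ σ <+: τ₂ ∧ ¬ τ₁ <+: τ₂ ∧ ¬ τ₂ <+: τ₁

/-- Two prefixes of the same list of equal length are equal. -/
lemma prefix_eq_of_length {l a b : List Bool} (ha : a <+: l) (hb : b <+: l)
    (h : a.length = b.length) : a = b := by
  rcases List.prefix_or_prefix_of_prefix ha hb with h' | h'
  · exact h'.eq_of_length h
  · exact (h'.eq_of_length h.symm).symm

/-- Two incomparable strings split at a common node. -/
lemma exists_diff : ∀ (a b : List Bool), ¬ a <+: b → ¬ b <+: a →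
    ∃ ρ x y, x ≠ y ∧ ρ ++ [x] <+: a ∧ ρ ++ [y] <+: b := by
  intro a
  induction a with
  | nil => intro b h _; exact absurd (List.nil_prefix) h
  | cons x a' ih =>
    intro b h1 h2
    cases b with
    | nil => exact absurd List.nil_prefix h2
    | cons y b' =>
      by_cases hxy : x = y
      · subst hxy
        have h1' : ¬ a' <+: b' := fun hp => h1 (by simp [List.cons_prefix_cons, hp])
        have h2' : ¬ b' <+: a' := fun hp => h2 (by simp [List.cons_prefix_cons, hp])
        obtain ⟨ρ, u, v, huv, hu, hv⟩ := ih b' h1' h2'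
        exact ⟨x :: ρ, u, v, huv, by simpa [List.cons_prefix_cons] using hu,
          by simpa [List.cons_prefix_cons] using hv⟩
      · exact ⟨[], x, y, hxy, by simp [List.cons_prefix_cons], by simp [List.cons_prefix_cons]⟩

/-- Every node of a perfect tree extends to a splitting node. -/
lemma exists_split (T : Set (List Bool)) (hT : IsPerfectTree T) {σ : List Bool} (h : σ ∈ T) :
    ∃ ρ, σ <+: ρ ∧ ρ ∈ T ∧ ρ ++ [false] ∈ T ∧ ρ ++ [true] ∈ T := by
  obtain ⟨hne, hdc, hsp⟩ := hT
  obtain ⟨τ₁, h1, τ₂, h2, hp1, hp2, hi1, hi2⟩ := hsp σ h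
  obtain ⟨ρ, x, y, hxy, hx, hy⟩ := exists_diff τ₁ τ₂ hi1 hi2
  have hnot : ¬ ρ ++ [x] <+: τ₂ := by
    intro hc
    have := prefix_eq_of_length hc hy (by simp)
    have := List.append_inj_right this rfl
    simp at this
    exact hxy this
  have hσρx : σ <+: ρ ++ [x] := by
    rcases List.prefix_or_prefix_of_prefix hp1 hx with h' | h'
    · exact h'
    · exact absurd (h'.trans hp2) hnot
  have hσne : σ ≠ ρ ++ [x] := fun hc => hnot (hc ▸ hp2)
  have hσρ : σ <+: ρ := by
    have hlen : σ.length ≤ ρ.length := by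
      have h1 := hσρx.length_le
      simp at h1
      rcases Nat.lt_or_ge σ.length (ρ.length + 1) with h' | h'
      · omega
      · exact absurd (hσρx.eq_of_length (by simp; omega)) hσne
    rcases List.prefix_or_prefix_of_prefix hσρx (List.prefix_append ρ [x]) with h' | h'
    · exact h'
    · have := h'.eq_of_length (le_antisymm h'.length_le hlen)
      exact this ▸ List.prefix_rfl
  have hρT : ρ ∈ T := hdc ρ τ₁ ((List.prefix_append ρ [x]).trans hx) h1
  have hxT : ρ ++ [x] ∈ T := hdc _ τ₁ hx h1
  have hyT : ρ ++ [y] ∈ T := hdc _ τ₂ hy h2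
  refine ⟨ρ, hσρ, hρT, ?_, ?_⟩ <;> cases x <;> cases y <;> simp_all

-- A chosen splitting node extending `σ` (junk value if `σ ∉ T`).
open Classical in
noncomputable def spl (T : Set (List Bool)) (hT : IsPerfectTree T) (σ : List Bool) : List Bool :=
  if h : σ ∈ T then (exists_split T hT h).choose else []

open Classical in
lemma spl_spec (T : Set (List Bool)) (hT : IsPerfectTree T) {σ : List Bool} (h : σ ∈ T) :
    σ <+: spl T hT σ ∧ spl T hT σ ∈ T ∧ spl T hT σ ++ [false] ∈ T ∧
      spl T hT σ ++ [true] ∈ T := by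
  rw [spl, dif_pos h]
  exact (exists_split T hT h).choose_spec

/-- The skeleton: an embedding of the full binary tree into `T` using splitting nodes,
indexed by reversed binary strings, leaving a gap after each splitting node. -/
noncomputable def skel (T : Set (List Bool)) (hT : IsPerfectTree T) : List Bool → List Bool
  | [] => spl T hT []
  | b :: u => spl T hT (spl T hT (skel T hT u ++ [b]) ++ [false])

section Skel

variable (T : Set (List Bool)) (hT : IsPerfectTree T)

lemma skel_split : ∀ u, skel T hT u ∈ T ∧ skel T hT u ++ [false] ∈ T ∧
    skel T hT u ++ [true] ∈ T := by
  have hnil : ([] : List Bool) ∈ T := hT.2.1 [] hT.1.choose List.nil_prefix hT.1.choose_spec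
  intro u
  induction u with
  | nil =>
    have := spl_spec T hT hnil
    exact ⟨this.2.1, this.2.2.1, this.2.2.2⟩
  | cons b u ih =>
    have h1 : skel T hT u ++ [b] ∈ T := by cases b; exacts [ih.2.1, ih.2.2]
    have h2 := spl_spec T hT h1
    have h3 := spl_spec T hT h2.2.2.1
    exact ⟨h3.2.1, h3.2.2.1, h3.2.2.2⟩

lemma skel_step (u : List Bool) (b : Bool) :
    spl T hT (skel T hT u ++ [b]) ++ [false] <+: skel T hT (b :: u) ∧
      skel T hT u ++ [b] <+: spl T hT (skel T hT u ++ [b]) := by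
  have h1 : skel T hT u ++ [b] ∈ T := by
    have := skel_split T hT u; cases b; exacts [this.2.1, this.2.2]
  have h2 := spl_spec T hT h1
  have h3 := spl_spec T hT h2.2.2.1
  exact ⟨h3.1, h2.1⟩

lemma skel_cons (u : List Bool) (b : Bool) :
    skel T hT u ++ [b] <+: skel T hT (b :: u) :=
  ((skel_step T hT u b).2.trans (List.prefix_append _ [false])).trans (skel_step T hT u b).1

/-- Monotonicity of the skeleton. -/
lemma skel_mono : ∀ w u : List Bool, u <:+ w → skel T hT u <+: skel T hT w := by
  intro w
  induction w with
  | nil => intro u hu; rw [List.suffix_nil.mp hu]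
  | cons b w ih =>
    intro u hu
    rcases List.suffix_cons_iff.mp hu with h | h
    · rw [h]
    · exact ((ih u h).trans (List.prefix_append _ [b])).trans (skel_cons T hT w b)

/-- Order reflection for the skeleton. -/
lemma skel_reflect : ∀ u w : List Bool, skel T hT u <+: skel T hT w → u <:+ w := by
  intro u
  induction u with
  | nil => intro w _; exact List.nil_suffix
  | cons c u ih =>
    intro w h
    have hcu : skel T hT u ++ [c] <+: skel T hT w := (skel_cons T hT u c).trans h
    have hu : skel T hT u <+: skel T hT w := (List.prefix_append _ [c]).trans hcu
    have husuf : u <:+ w := ih w hu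
    have hune : u ≠ w := by
      intro hc; subst hc
      have := hcu.length_le
      simp at this
    -- u is a proper suffix of w, so some d :: u is a suffix of w
    obtain ⟨t, ht⟩ := husuf
    have htne : t ≠ [] := by intro hc; rw [hc] at ht; exact hune ht
    obtain ⟨t', d, rfl⟩ := t.eq_nil_or_concat.resolve_left htne
    have hdu : (d :: u) <:+ w := ⟨t', by rw [← ht]; simp⟩
    have hdw : skel T hT u ++ [d] <+: skel T hT w :=
      (skel_cons T hT u d).trans (skel_mono T hT w (d :: u) hdu)
    have : skel T hT u ++ [c] = skel T hT u ++ [d] :=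
      prefix_eq_of_length hcu hdw (by simp)
    have hcd : c = d := by simpa using List.append_inj_right this rfl
    exact hcd ▸ hdu

end Skel

/-- Splitting a perfect tree by a dense open set: there is a dense, upward closed
(in `T`) set `D ⊆ T` such that `T \ D` is again a perfect tree. -/
theorem stmt_10 (T : Set (List Bool)) (hT : IsPerfectTree T) :
    ∃ D ⊆ T, (∀ σ ∈ D, ∀ τ ∈ T, σ <+: τ → τ ∈ D) ∧
      (∀ σ ∈ T, ∃ τ ∈ D, σ <+: τ) ∧ IsPerfectTree (T \ D) := by
  classical
  have hdc := hT.2.1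
  set e := skel T hT with he
  -- the perfect subtree: downward closure of the skeleton
  set P : Set (List Bool) := {σ | ∃ u, σ <+: e u} with hP
  have hPT : P ⊆ T := by
    rintro σ ⟨u, hu⟩
    exact hdc σ (e u) hu (skel_split T hT u).1
  refine ⟨T \ P, Set.diff_subset, ?_, ?_, ?_⟩
  · -- upward closed
    rintro σ ⟨hσT, hσP⟩ τ hτT hστ
    refine ⟨hτT, ?_⟩
    rintro ⟨u, hu⟩
    exact hσP ⟨u, hστ.trans hu⟩
  · -- dense
    intro σ hσ
    by_cases hσP : σ ∈ P
    · obtain ⟨u, hu⟩ := hσP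
      set ρ := spl T hT (e u ++ [false]) with hρ
      have hfT : e u ++ [false] ∈ T := (skel_split T hT u).2.1
      have hspec := spl_spec T hT hfT
      refine ⟨ρ ++ [true], ⟨hspec.2.2.2, ?_⟩, ?_⟩
      · -- ρ ++ [true] ∉ P
        rintro ⟨w, hw⟩
        have heu : e u <+: e w := by
          refine List.IsPrefix.trans ?_ hw
          exact ((List.prefix_append _ [false]).trans hspec.1).trans (List.prefix_append _ [true])
        have husuf : u <:+ w := skel_reflect T hT u w heu
        have hune : u ≠ w := by
          intro hc; subst hc
          have h1 : e u ++ [false] <+: e u :=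
            (hspec.1.trans (List.prefix_append ρ [true])).trans hw
          have h2 := h1.length_le
          simp at h2
        obtain ⟨t, ht⟩ := husuf
        have htne : t ≠ [] := by intro hc; rw [hc] at ht; exact hune ht
        obtain ⟨t', b, rfl⟩ := t.eq_nil_or_concat.resolve_left htne
        have hbu : (b :: u) <:+ w := ⟨t', by rw [← ht]; simp⟩
        have hbw : e (b :: u) <+: e w := skel_mono T hT w (b :: u) hbu
        -- e u ++ [b] is a prefix of e w, as is e u ++ [false]
        have h1 : e u ++ [b] <+: e w := (skel_cons T hT u b).trans hbw
        have h2 : e u ++ [false] <+: e w :=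
          (hspec.1.trans (List.prefix_append ρ [true])).trans hw
        have hb : b = false := by
          have := prefix_eq_of_length h1 h2 (by simp)
          simpa using List.append_inj_right this rfl
        subst hb
        -- now ρ ++ [false] and ρ ++ [true] are both prefixes of e w
        have h3 : ρ ++ [false] <+: e w := (skel_step T hT u false).1.trans hbw
        have h4 : ρ ++ [true] <+: e w := hw
        have := prefix_eq_of_length h3 h4 (by simp)
        simpa using List.append_inj_right this rfl
      · exact (hu.trans ((List.prefix_append _ [false]).trans hspec.1)).trans
          (List.prefix_append ρ [true])
    · exact ⟨σ, ⟨hσ, hσP⟩, List.prefix_rfl⟩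
  · -- T \ (T \ P) is perfect; first note T \ (T \ P) = P
    have hTP : T \ (T \ P) = P := by
      ext σ
      simp only [Set.mem_diff, not_and, not_not]
      constructor
      · rintro ⟨h1, h2⟩; exact h2 h1
      · intro h; exact ⟨hPT h, fun _ => h⟩
    rw [hTP]
    refine ⟨⟨e [], [], List.prefix_rfl⟩, ?_, ?_⟩
    · rintro σ τ h ⟨u, hu⟩
      exact ⟨u, h.trans hu⟩
    · rintro σ ⟨u, hu⟩
      refine ⟨e (false :: u), ⟨false :: u, List.prefix_rfl⟩,
        e (true :: u), ⟨true :: u, List.prefix_rfl⟩,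
        hu.trans ?_, hu.trans ?_, ?_, ?_⟩
      · exact (List.prefix_append _ [false]).trans (skel_cons T hT u false)
      · exact (List.prefix_append _ [true]).trans (skel_cons T hT u true)
      · intro hc
        have h1 : e u ++ [false] <+: e (true :: u) := (skel_cons T hT u false).trans hc
        have h2 : e u ++ [true] <+: e (true :: u) := skel_cons T hT u true
        have := prefix_eq_of_length h1 h2 (by simp)
        simpa using List.append_inj_right this rfl
      · intro hc
        have h1 : e u ++ [false] <+: e (false :: u) := skel_cons T hT u false
        have h2 : e u ++ [true] <+: e (false :: u) := (skel_cons T hT u true).trans hc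
        have := prefix_eq_of_length h1 h2 (by simp)
        simpa using List.append_inj_right this rfl
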